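/- Let c = c_s + c_a be the decomposition of transition rates of an irreducible finite-state Markov chain with invariant measure π into reversible part c_s and antisymmetric part c_a, with q(x,y) = π(x)c(x→y). Then for every probability measure μ on Ω and every function V: Ω → ℝ, the quantity I_A(μ,V) = ∑_{x≠y} √(μ(y)/π(y)) (1 − e^{V(y)−V(x)}) √(μ(x)π(x)) c(x→y) satisfies I_A(μ,V) ≤ ∑_{x≠y} √(μ(x)μ(y)/(π(x)π(y))) [c_s(x→y) − √(c_s(x→y)² − c_a(x→y)²)] π(x). -/

import Mathlib

open Finset

lemma sum_offDiag_pair_le {Ω : Type*} [Fintype Ω] [DecidableEq Ω] (F G : Ω × Ω → ℝ)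
    (h : ∀ p ∈ Finset.univ.offDiag, F p + F p.swap ≤ G p + G p.swap) :
    ∑ p ∈ Finset.univ.offDiag, F p ≤ ∑ p ∈ Finset.univ.offDiag, G p := by
  have hs : ∀ H : Ω × Ω → ℝ, ∑ p ∈ Finset.univ.offDiag, H p.swap
      = ∑ p ∈ Finset.univ.offDiag, H p := by
    intro H
    apply Finset.sum_nbij' (fun p => Prod.swap p) (fun p => Prod.swap p) <;>
      simp [Finset.mem_offDiag, ne_comm]
  have h2 : ∑ p ∈ Finset.univ.offDiag, (F p + F p.swap)
      ≤ ∑ p ∈ Finset.univ.offDiag, (G p + G p.swap) := Finset.sum_le_sum h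
  rw [Finset.sum_add_distrib, Finset.sum_add_distrib, hs F, hs G] at h2
  linarith

lemma amgm_pair (a b u : ℝ) (ha : 0 ≤ a) (hb : 0 ≤ b) (hu : 0 < u) :
    2 * Real.sqrt (a * b) ≤ a * u + b / u := by
  have h1 : Real.sqrt (a * u) * Real.sqrt (b / u) = Real.sqrt (a * b) := by
    rw [← Real.sqrt_mul (by positivity)]
    congr 1; field_simp
  have h2 : 2 * (Real.sqrt (a * u) * Real.sqrt (b / u))
      ≤ Real.sqrt (a * u) ^ 2 + Real.sqrt (b / u) ^ 2 := by
    nlinarith [sq_nonneg (Real.sqrt (a * u) - Real.sqrt (b / u))]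
  rw [Real.sq_sqrt (by positivity), Real.sq_sqrt (by positivity), h1] at h2
  linarith

set_option maxHeartbeats 1000000 in
theorem IA_upper_bound
    {Ω : Type*} [Fintype Ω] [DecidableEq Ω] [Nonempty Ω]
    (c : Ω → Ω → ℝ) (π : Ω → ℝ)
    (hc : ∀ x y, x ≠ y → 0 ≤ c x y)
    (hπpos : ∀ x, 0 < π x) (hπsum : ∑ x, π x = 1)
    (hinv : ∀ f : Ω → ℝ, ∑ x, π x * (∑ y, c x y * (f y - f x)) = 0)
    (hirr : ∀ x y : Ω, x ≠ y → ∃ (k : ℕ) (p : Fin (k + 1) → Ω),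
      p 0 = x ∧ p (Fin.last k) = y ∧ ∀ i : Fin k, 0 < c (p i.castSucc) (p i.succ))
    (cs ca : Ω → Ω → ℝ)
    (hcs : ∀ x y, cs x y = (c x y + π y * c y x / π x) / 2)
    (hca : ∀ x y, ca x y = c x y - cs x y)
    (μ : Ω → ℝ) (hμ : ∀ x, 0 ≤ μ x) (hμsum : ∑ x, μ x = 1)
    (V : Ω → ℝ) :
    ∑ p ∈ Finset.univ.offDiag,
        Real.sqrt (μ p.2 / π p.2) * (1 - Real.exp (V p.2 - V p.1))
          * Real.sqrt (μ p.1 * π p.1) * c p.1 p.2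
    ≤ ∑ p ∈ Finset.univ.offDiag,
        Real.sqrt (μ p.1 / π p.1 * (μ p.2 / π p.2))
          * (cs p.1 p.2 - Real.sqrt (cs p.1 p.2 ^ 2 - ca p.1 p.2 ^ 2)) * π p.1 := by
  apply sum_offDiag_pair_le
  rintro ⟨x, y⟩ hp
  simp only [Finset.mem_offDiag] at hp
  obtain ⟨-, -, hxy⟩ := hp
  simp only [Prod.swap, Prod.fst, Prod.snd]
  have hπx := hπpos x
  have hπy := hπpos y
  set a := π x * c x y with hadef
  set b := π y * c y x with hbdef
  have ha : 0 ≤ a := mul_nonneg hπx.le (hc x y hxy)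
  have hb : 0 ≤ b := mul_nonneg hπy.le (hc y x (Ne.symm hxy))
  set u := Real.exp (V y - V x) with hudef
  have hu : 0 < u := Real.exp_pos _
  have hu' : Real.exp (V x - V y) = 1 / u := by
    rw [hudef, one_div, ← Real.exp_neg, neg_sub]
  -- sqrt rewrites
  have hsq : ∀ z : Ω, Real.sqrt (μ z * π z) = Real.sqrt (μ z / π z) * π z := by
    intro z
    have h1 : Real.sqrt (μ z / π z) * π z = Real.sqrt (μ z / π z * π z ^ 2) := by
      rw [Real.sqrt_mul (div_nonneg (hμ z) (hπpos z).le), Real.sqrt_sq (hπpos z).le]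
    have h2 : μ z / π z * π z ^ 2 = μ z * π z := by
      rw [div_mul_eq_mul_div, mul_div_assoc, pow_two, mul_div_assoc,
        div_self (hπpos z).ne', mul_one]
    rw [h1, h2]
  set S := Real.sqrt (μ x / π x) * Real.sqrt (μ y / π y) with hSdef
  have hS : 0 ≤ S := mul_nonneg (Real.sqrt_nonneg _) (Real.sqrt_nonneg _)
  have hSxy : Real.sqrt (μ x / π x * (μ y / π y)) = S :=
    Real.sqrt_mul (div_nonneg (hμ x) hπx.le) _
  have hSyx : Real.sqrt (μ y / π y * (μ x / π x)) = S := by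
    rw [mul_comm]; exact hSxy
  -- cs, ca identities
  have hcsx : cs x y * π x = (a + b) / 2 := by
    rw [hcs, hadef, hbdef]; field_simp
  have hcsy : cs y x * π y = (a + b) / 2 := by
    rw [hcs, hadef, hbdef]; field_simp; ring
  have hcax : ca x y * π x = (a - b) / 2 := by
    rw [hca]; linear_combination -hadef - hcsx
  have hcay : ca y x * π y = (b - a) / 2 := by
    rw [hca]; linear_combination -hbdef - hcsy
  have hsqrtx : Real.sqrt (cs x y ^ 2 - ca x y ^ 2) * π x = Real.sqrt (a * b) := by
    have ht : (cs x y ^ 2 - ca x y ^ 2) * π x ^ 2 = a * b := by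
      linear_combination (cs x y * π x + (a + b) / 2) * hcsx
        - (ca x y * π x + (a - b) / 2) * hcax
    have hπx2 : 0 < π x ^ 2 := by positivity
    have ht0 : 0 ≤ cs x y ^ 2 - ca x y ^ 2 := by
      nlinarith [mul_nonneg ha hb]
    rw [← Real.sqrt_sq hπx.le, ← Real.sqrt_mul ht0, ht]
  have hsqrty : Real.sqrt (cs y x ^ 2 - ca y x ^ 2) * π y = Real.sqrt (a * b) := by
    have ht : (cs y x ^ 2 - ca y x ^ 2) * π y ^ 2 = a * b := by
      linear_combination (cs y x * π y + (a + b) / 2) * hcsy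
        - (ca y x * π y + (b - a) / 2) * hcay
    have hπy2 : 0 < π y ^ 2 := by positivity
    have ht0 : 0 ≤ cs y x ^ 2 - ca y x ^ 2 := by
      nlinarith [mul_nonneg ha hb]
    rw [← Real.sqrt_sq hπy.le, ← Real.sqrt_mul ht0, ht]
  -- rewrite both sides
  have lhs_eq : Real.sqrt (μ y / π y) * (1 - Real.exp (V y - V x)) * Real.sqrt (μ x * π x) * c x y
      + Real.sqrt (μ x / π x) * (1 - Real.exp (V x - V y)) * Real.sqrt (μ y * π y) * c y x
      = S * ((1 - u) * a + (1 - 1 / u) * b) := by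
    rw [hsq x, hsq y, hu', hSdef, hadef, hbdef, hudef]; ring
  have rhs_eq : Real.sqrt (μ x / π x * (μ y / π y))
        * (cs x y - Real.sqrt (cs x y ^ 2 - ca x y ^ 2)) * π x
      + Real.sqrt (μ y / π y * (μ x / π x))
        * (cs y x - Real.sqrt (cs y x ^ 2 - ca y x ^ 2)) * π y
      = S * (a + b - 2 * Real.sqrt (a * b)) := by
    rw [hSxy, hSyx]
    calc S * (cs x y - Real.sqrt (cs x y ^ 2 - ca x y ^ 2)) * π x
          + S * (cs y x - Real.sqrt (cs y x ^ 2 - ca y x ^ 2)) * π y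
        = S * (cs x y * π x - Real.sqrt (cs x y ^ 2 - ca x y ^ 2) * π x)
          + S * (cs y x * π y - Real.sqrt (cs y x ^ 2 - ca y x ^ 2) * π y) := by ring
      _ = S * ((a + b) / 2 - Real.sqrt (a * b)) + S * ((a + b) / 2 - Real.sqrt (a * b)) := by
          rw [hcsx, hcsy, hsqrtx, hsqrty]
      _ = S * (a + b - 2 * Real.sqrt (a * b)) := by ring
  rw [lhs_eq, rhs_eq]
  have key := amgm_pair a b u ha hb hu
  have h1 : (1 - u) * a + (1 - 1 / u) * b ≤ a + b - 2 * Real.sqrt (a * b) := by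
    have hbu : b / u = (1 / u) * b := by ring
    linarith [key, hbu ▸ key]
  exact mul_le_mul_of_nonneg_left h1 hS
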